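/- Let U⁽²⁾(x,y) = (9x⁴ + 8x³y + 5y⁴)/(x² + y²) (defined for (x,y) ≠ 0). Then the SLO condition α ∂_x U(x, αx) − ∂_y U(x, αx) = 0 for all x ≠ 0 is equivalent to (2 − α)(5α − 1)(1 + α) = 0, so the slope spectrum is {2, −1, 1/5}. -/

import Mathlib

lemma slo_key (α x : ℝ) (hx : x ≠ 0) :
    α * deriv (fun t : ℝ => (9 * t ^ 4 + 8 * t ^ 3 * (α * x) + 5 * (α * x) ^ 4) / (t ^ 2 + (α * x) ^ 2)) x
      - deriv (fun t : ℝ => (9 * x ^ 4 + 8 * x ^ 3 * t + 5 * t ^ 4) / (x ^ 2 + t ^ 2)) (α * x)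
      = x * (4 * ((2 - α) * (5 * α - 1) * (1 + α))) / (1 + α ^ 2) := by
  have hden1 : x ^ 2 + (α * x) ^ 2 ≠ 0 := by positivity
  have h1n : HasDerivAt (fun t : ℝ => 9 * t ^ 4 + 8 * t ^ 3 * (α * x) + 5 * (α * x) ^ 4)
      (9 * ((4 : ℕ) * x ^ 3) + 8 * ((3 : ℕ) * x ^ 2) * (α * x)) x := by
    exact (((hasDerivAt_pow 4 x).const_mul 9).add
      (((hasDerivAt_pow 3 x).const_mul 8).mul_const (α * x))).add_const _
  have h1d : HasDerivAt (fun t : ℝ => t ^ 2 + (α * x) ^ 2) ((2 : ℕ) * x ^ 1) x :=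
    (hasDerivAt_pow 2 x).add_const _
  have h1 : deriv (fun t : ℝ => (9 * t ^ 4 + 8 * t ^ 3 * (α * x) + 5 * (α * x) ^ 4) / (t ^ 2 + (α * x) ^ 2)) x = _ :=
    (h1n.div h1d hden1).deriv
  have h2n : HasDerivAt (fun t : ℝ => 9 * x ^ 4 + 8 * x ^ 3 * t + 5 * t ^ 4)
      (8 * x ^ 3 * 1 + 5 * ((4 : ℕ) * (α * x) ^ 3)) (α * x) := by
    exact ((((hasDerivAt_id (α * x)).const_mul (8 * x ^ 3)).const_add
      (9 * x ^ 4)).add ((hasDerivAt_pow 4 (α * x)).const_mul 5))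
  have h2d : HasDerivAt (fun t : ℝ => x ^ 2 + t ^ 2) ((2 : ℕ) * (α * x) ^ 1) (α * x) :=
    (hasDerivAt_pow 2 (α * x)).const_add _
  have h2 : deriv (fun t : ℝ => (9 * x ^ 4 + 8 * x ^ 3 * t + 5 * t ^ 4) / (x ^ 2 + t ^ 2)) (α * x) = _ :=
    (h2n.div h2d hden1).deriv
  rw [h1, h2]
  have h1a : (1 : ℝ) + α ^ 2 ≠ 0 := by positivity
  field_simp
  ring

theorem nonpolynomial_slope_spectrum (α : ℝ) :
    let U : ℝ → ℝ → ℝ := fun x y => (9 * x ^ 4 + 8 * x ^ 3 * y + 5 * y ^ 4) / (x ^ 2 + y ^ 2)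
    ((∀ x : ℝ, x ≠ 0 →
        α * deriv (fun t => U t (α * x)) x - deriv (fun t => U x t) (α * x) = 0) ↔
      (2 - α) * (5 * α - 1) * (1 + α) = 0) ∧
    ((2 - α) * (5 * α - 1) * (1 + α) = 0 ↔ (α = 2 ∨ α = -1 ∨ α = 1 / 5)) := by
  intro U
  have ha : (1 : ℝ) + α ^ 2 ≠ 0 := by positivity
  constructor
  · constructor
    · intro h
      have h1 := h 1 one_ne_zero
      rw [show (fun t => U t (α * 1)) = fun t : ℝ =>
          (9 * t ^ 4 + 8 * t ^ 3 * (α * 1) + 5 * (α * 1) ^ 4) / (t ^ 2 + (α * 1) ^ 2) from rfl,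
        show (fun t => U 1 t) = fun t : ℝ =>
          (9 * (1:ℝ) ^ 4 + 8 * (1:ℝ) ^ 3 * t + 5 * t ^ 4) / ((1:ℝ) ^ 2 + t ^ 2) from rfl,
        slo_key α 1 one_ne_zero] at h1
      field_simp at h1
      linarith
    · intro h x hx
      rw [show (fun t => U t (α * x)) = fun t : ℝ =>
          (9 * t ^ 4 + 8 * t ^ 3 * (α * x) + 5 * (α * x) ^ 4) / (t ^ 2 + (α * x) ^ 2) from rfl,
        show (fun t => U x t) = fun t : ℝ =>
          (9 * x ^ 4 + 8 * x ^ 3 * t + 5 * t ^ 4) / (x ^ 2 + t ^ 2) from rfl,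
        slo_key α x hx, h]
      simp
  · constructor
    · intro h
      rcases mul_eq_zero.mp h with h' | h'
      · rcases mul_eq_zero.mp h' with h'' | h''
        · left; linarith
        · right; right; linarith
      · right; left; linarith
    · rintro (rfl | rfl | rfl) <;> norm_num
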